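/- Let η_1, η_2, … be i.i.d. uniform on the ball U = B(z,r) ⊂ ℝ^d, let ε_1, ε_2, … be {0,1}-valued random variables independent of (η_j), let ψ(x) = r² − ‖x−z‖², and fix p ∈ ℕ, c > 0. Then for every k ≥ (2p+1)/c, E[ (∑_{j=1}^k ψ²(η_j) 1_{ε_j=1})^{-p} 1_{∑_{j=1}^k ε_j ≥ ck} ] ≤ C(c,ψ,p) k^{-p}, where C(c,ψ,p) is a constant not depending on k. -/

import Mathlib

open MeasureTheory ProbabilityTheory
open scoped ENNReal NNReal

/-- The uniform distribution on the open ball `B(z,r)` in `ℝ^d`. -/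
noncomputable def uniformBall (d : ℕ) (z : EuclideanSpace ℝ (Fin d)) (r : ℝ) :
    Measure (EuclideanSpace ℝ (Fin d)) :=
  (volume (Metric.ball z r))⁻¹ • volume.restrict (Metric.ball z r)

lemma uniformBall_isProb {d : ℕ} {z : EuclideanSpace ℝ (Fin d)} {r : ℝ} (hr : 0 < r) :
    IsProbabilityMeasure (uniformBall d z r) := by
  constructor
  rw [uniformBall, Measure.smul_apply, Measure.restrict_apply MeasurableSet.univ,
    Set.univ_inter, smul_eq_mul]
  exact ENNReal.inv_mul_cancel (Metric.measure_ball_pos volume z hr).ne'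
    measure_ball_lt_top.ne

lemma uniformBall_compl_ball {d : ℕ} {z : EuclideanSpace ℝ (Fin d)} {r : ℝ} :
    uniformBall d z r (Metric.ball z r)ᶜ = 0 := by
  rw [uniformBall, Measure.smul_apply,
    Measure.restrict_apply (MeasurableSet.compl Metric.isOpen_ball.measurableSet)]
  simp

lemma jensen_rpow {α : Type*} [MeasurableSpace α] (μ : Measure α) [IsProbabilityMeasure μ]
    {f : α → ℝ≥0∞} (hf : Measurable f) {c : ℝ} (hc0 : 0 < c) (hc1 : c ≤ 1) :
    ∫⁻ a, f a ^ c ∂μ ≤ (∫⁻ a, f a ∂μ) ^ c := by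
  rcases eq_or_lt_of_le hc1 with h1 | h1
  · simp [h1]
  have hconj : (c⁻¹).HolderConjugate (1 - c)⁻¹ := Real.HolderConjugate.inv_one_sub_inv hc0 h1
  have := ENNReal.lintegral_mul_le_Lp_mul_Lq μ hconj (f := fun a => f a ^ c)
    (g := fun _ => 1) (hf.pow_const c).aemeasurable aemeasurable_const
  simpa [ENNReal.one_rpow, ← ENNReal.rpow_mul, mul_inv_cancel₀ hc0.ne',
    one_div, inv_inv, measure_univ] using this

lemma pow_sub_pow_le_aux {a b : ℝ} (hb : 0 ≤ b) (hba : b ≤ a) (d : ℕ) :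
    a ^ d - b ^ d ≤ d * a ^ (d - 1) * (a - b) := by
  rw [← geom_sum₂_mul a b d]
  apply mul_le_mul_of_nonneg_right ?_ (by linarith)
  calc ∑ i ∈ Finset.range d, a ^ i * b ^ (d - 1 - i)
      ≤ ∑ _i ∈ Finset.range d, a ^ (d - 1) := by
        apply Finset.sum_le_sum
        intro i hi
        have hia : a ^ i * b ^ (d - 1 - i) ≤ a ^ i * a ^ (d - 1 - i) := by
          apply mul_le_mul_of_nonneg_left (pow_le_pow_left₀ hb hba _)
            (pow_nonneg (hb.trans hba) _)
        refine hia.trans_eq ?_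
        rw [← pow_add]
        congr 1
        have := Finset.mem_range.mp hi
        omega
    _ = d * a ^ (d - 1) := by
        rw [Finset.sum_const, Finset.card_range, nsmul_eq_mul]

lemma sqrt_lb {r u : ℝ} (hr : 0 < r) (hu : 0 < u) (hur : u < r ^ 2) :
    r - Real.sqrt (r ^ 2 - u) ≤ u / r := by
  rcases le_or_gt r (u / r) with h | h
  · have := Real.sqrt_nonneg (r ^ 2 - u); linarith
  · have h1 : 0 ≤ r - u / r := by linarith
    have h2 : (r - u / r) ^ 2 ≤ r ^ 2 - u := by
      have hu2 : u / r ^ 2 ≤ 1 := by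
        rw [div_le_one (by positivity)]; linarith
      have : (u / r) ^ 2 ≤ u := by
        have : (u / r) ^ 2 = u * (u / r ^ 2) := by field_simp
        rw [this]
        nlinarith
      have hru : r * (u / r) = u := by field_simp
      nlinarith [hru, this]
    have := (Real.le_sqrt h1 (by nlinarith)).mpr h2
    linarith

lemma shell_bound {d : ℕ} (z : EuclideanSpace ℝ (Fin d)) {r : ℝ} (hr : 0 < r) (hd : 0 < d)
    {u : ℝ} (hu : 0 ≤ u) :
    volume {x | x ∈ Metric.ball z r ∧ r ^ 2 - ‖x - z‖ ^ 2 < u}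
      ≤ ENNReal.ofReal (d * u / r ^ 2 * r ^ d)
        * volume (Metric.ball (0 : EuclideanSpace ℝ (Fin d)) 1) := by
  haveI : Nontrivial (EuclideanSpace ℝ (Fin d)) := by
    apply Module.nontrivial_of_finrank_pos (R := ℝ)
    rw [finrank_euclideanSpace_fin]; exact hd
  have hfr : (Module.finrank ℝ (EuclideanSpace ℝ (Fin d))) = d := finrank_euclideanSpace_fin
  have hvol_ball : volume (Metric.ball z r)
      = ENNReal.ofReal (r ^ d) * volume (Metric.ball (0 : EuclideanSpace ℝ (Fin d)) 1) := by
    rw [Measure.addHaar_ball volume z hr.le, hfr]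
  rcases eq_or_lt_of_le hu with hu0 | hu0
  · -- u = 0 : the set is empty
    have : {x | x ∈ Metric.ball z r ∧ r ^ 2 - ‖x - z‖ ^ 2 < u} = ∅ := by
      ext x
      simp only [Set.mem_setOf_eq, Set.mem_empty_iff_false, iff_false, not_and]
      intro hx
      have : ‖x - z‖ < r := by
        rw [← dist_eq_norm]; exact Metric.mem_ball.mp hx
      have h2 : ‖x - z‖ ^ 2 < r ^ 2 := by
        apply pow_lt_pow_left₀ this (norm_nonneg _) (by norm_num)
      rw [← hu0]; linarith
    rw [this]; simp
  rcases lt_or_ge u (r ^ 2) with hur | hur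
  · -- main case : 0 < u < r^2
    set ρ := Real.sqrt (r ^ 2 - u) with hρ
    have hρ0 : 0 ≤ ρ := Real.sqrt_nonneg _
    have hρr : ρ < r := by
      have h := Real.sqrt_lt_sqrt (by linarith : (0:ℝ) ≤ r ^ 2 - u)
        (by linarith : r ^ 2 - u < r ^ 2)
      rwa [Real.sqrt_sq hr.le] at h
    have hsub : {x | x ∈ Metric.ball z r ∧ r ^ 2 - ‖x - z‖ ^ 2 < u}
        ⊆ Metric.ball z r \ Metric.closedBall z ρ := by
      rintro x ⟨hx, hx2⟩
      refine ⟨hx, ?_⟩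
      simp only [Metric.mem_closedBall, not_le]
      have hd2 : ρ ^ 2 < (dist x z) ^ 2 := by
        rw [hρ, Real.sq_sqrt (by linarith), dist_eq_norm]
        linarith
      exact lt_of_pow_lt_pow_left₀ 2 dist_nonneg hd2
    refine (measure_mono hsub).trans ?_
    rw [measure_diff (Metric.closedBall_subset_ball hρr)
      measurableSet_closedBall.nullMeasurableSet
      (measure_closedBall_lt_top).ne]
    rw [hvol_ball, Measure.addHaar_closedBall volume z hρ0, hfr]
    have key : ENNReal.ofReal (r ^ d) ≤ ENNReal.ofReal (ρ ^ d)
        + ENNReal.ofReal (d * u / r ^ 2 * r ^ d) := by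
      rw [← ENNReal.ofReal_add (by positivity) (by positivity)]
      apply ENNReal.ofReal_le_ofReal
      have h1 : r ^ d - ρ ^ d ≤ d * r ^ (d - 1) * (r - ρ) :=
        pow_sub_pow_le_aux hρ0 hρr.le d
      have h2 : r - ρ ≤ u / r := sqrt_lb hr hu0 hur
      have h3 : d * r ^ (d - 1) * (r - ρ) ≤ d * r ^ (d - 1) * (u / r) := by
        apply mul_le_mul_of_nonneg_left h2 (by positivity)
      have h4 : d * r ^ (d - 1) * (u / r) = d * u / r ^ 2 * r ^ d := by
        have : r ^ d = r ^ (d - 1) * r := by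
          rw [← pow_succ]; congr 1; omega
        rw [this]; field_simp
      linarith
    calc ENNReal.ofReal (r ^ d) * volume (Metric.ball (0 : EuclideanSpace ℝ (Fin d)) 1)
        - ENNReal.ofReal (ρ ^ d) * volume (Metric.ball (0 : EuclideanSpace ℝ (Fin d)) 1)
        ≤ (ENNReal.ofReal (ρ ^ d) + ENNReal.ofReal (d * u / r ^ 2 * r ^ d))
            * volume (Metric.ball (0 : EuclideanSpace ℝ (Fin d)) 1)
          - ENNReal.ofReal (ρ ^ d) * volume (Metric.ball (0 : EuclideanSpace ℝ (Fin d)) 1) := by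
          apply tsub_le_tsub_right
          exact mul_le_mul_left key _
      _ ≤ ENNReal.ofReal (d * u / r ^ 2 * r ^ d)
            * volume (Metric.ball (0 : EuclideanSpace ℝ (Fin d)) 1) := by
          rw [add_mul]
          exact tsub_le_iff_left.mpr le_rfl
  · -- u ≥ r^2
    apply (measure_mono (Set.sep_subset _ _)).trans
    rw [hvol_ball]
    apply mul_le_mul_left
    apply ENNReal.ofReal_le_ofReal
    have h1 : (1 : ℝ) ≤ d := by exact_mod_cast hd
    have : (1 : ℝ) ≤ d * u / r ^ 2 := by
      rw [le_div_iff₀ (by positivity)]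
      nlinarith
    nlinarith [pow_pos hr d]

lemma uniformBall_shell {d : ℕ} (z : EuclideanSpace ℝ (Fin d)) {r : ℝ} (hr : 0 < r)
    (hd : 0 < d) {u : ℝ} (hu : 0 ≤ u) :
    uniformBall d z r {x | r ^ 2 - ‖x - z‖ ^ 2 < u} ≤ ENNReal.ofReal (d * u / r ^ 2) := by
  haveI : Nontrivial (EuclideanSpace ℝ (Fin d)) := by
    apply Module.nontrivial_of_finrank_pos (R := ℝ)
    rw [finrank_euclideanSpace_fin]; exact hd
  set v := volume (Metric.ball (0 : EuclideanSpace ℝ (Fin d)) 1) with hv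
  have hvol_ball : volume (Metric.ball z r) = ENNReal.ofReal (r ^ d) * v := by
    rw [Measure.addHaar_ball volume z hr.le, finrank_euclideanSpace_fin]
  have hmeas : MeasurableSet {x : EuclideanSpace ℝ (Fin d) | r ^ 2 - ‖x - z‖ ^ 2 < u} := by
    apply measurableSet_lt _ measurable_const
    exact (continuous_const.sub (((continuous_id.sub continuous_const).norm).pow 2)).measurable
  rw [uniformBall, Measure.smul_apply, Measure.restrict_apply hmeas, smul_eq_mul]
  have hsub : {x : EuclideanSpace ℝ (Fin d) | r ^ 2 - ‖x - z‖ ^ 2 < u} ∩ Metric.ball z r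
      = {x | x ∈ Metric.ball z r ∧ r ^ 2 - ‖x - z‖ ^ 2 < u} := by
    ext x; simp [Set.mem_inter_iff, and_comm]
  rw [hsub, hvol_ball]
  have hne0 : ENNReal.ofReal (r ^ d) * v ≠ 0 := by
    rw [← hvol_ball]
    exact (Metric.measure_ball_pos volume z hr).ne'
  have hnetop : ENNReal.ofReal (r ^ d) * v ≠ ∞ := by
    rw [← hvol_ball]; exact measure_ball_lt_top.ne
  calc (ENNReal.ofReal (r ^ d) * v)⁻¹
        * volume {x | x ∈ Metric.ball z r ∧ r ^ 2 - ‖x - z‖ ^ 2 < u}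
      ≤ (ENNReal.ofReal (r ^ d) * v)⁻¹
        * (ENNReal.ofReal (d * u / r ^ 2 * r ^ d) * v) := by
        exact mul_le_mul_right (shell_bound z hr hd hu) _
    _ = ENNReal.ofReal (d * u / r ^ 2)
        * ((ENNReal.ofReal (r ^ d) * v)⁻¹ * (ENNReal.ofReal (r ^ d) * v)) := by
        rw [ENNReal.ofReal_mul (by positivity)]
        ring
    _ = ENNReal.ofReal (d * u / r ^ 2) := by
        rw [ENNReal.inv_mul_cancel hne0 hnetop, mul_one]

lemma K_lt_top {d : ℕ} (z : EuclideanSpace ℝ (Fin d)) {r : ℝ} (hr : 0 < r) (hd : 0 < d)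
    {α : ℝ} (hα0 : 0 < α) (hα : α < 1 / 2) :
    ∫⁻ x, ENNReal.ofReal (((r ^ 2 - ‖x - z‖ ^ 2) ^ 2) ^ (-α)) ∂(uniformBall d z r) ≠ ∞ := by
  haveI := uniformBall_isProb (z := z) (d := d) hr
  set μB := uniformBall d z r with hμB
  have hg_meas : Measurable fun x : EuclideanSpace ℝ (Fin d) => (r ^ 2 - ‖x - z‖ ^ 2) ^ 2 :=
    ((continuous_const.sub (((continuous_id.sub continuous_const).norm).pow 2)).pow 2).measurable
  have hf_meas : Measurable fun x : EuclideanSpace ℝ (Fin d) =>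
      ((r ^ 2 - ‖x - z‖ ^ 2) ^ 2) ^ (-α) := hg_meas.pow_const (-α)
  have hf_nn : 0 ≤ᵐ[μB] fun x : EuclideanSpace ℝ (Fin d) =>
      ((r ^ 2 - ‖x - z‖ ^ 2) ^ 2) ^ (-α) :=
    Filter.Eventually.of_forall fun x => Real.rpow_nonneg (by positivity) _
  rw [lintegral_eq_lintegral_meas_lt μB hf_nn hf_meas.aemeasurable]
  set γ : ℝ := 1 / (2 * α) with hγdef
  have hγ : 1 < γ := by
    rw [hγdef, lt_div_iff₀ (by linarith)]
    linarith
  have tail : ∀ t : ℝ, 0 < t →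
      μB {x | t < ((r ^ 2 - ‖x - z‖ ^ 2) ^ 2) ^ (-α)}
        ≤ ENNReal.ofReal (d / r ^ 2 * t ^ (-γ)) := by
    intro t ht
    have hsub : {x : EuclideanSpace ℝ (Fin d) | t < ((r ^ 2 - ‖x - z‖ ^ 2) ^ 2) ^ (-α)}
        ⊆ {x | r ^ 2 - ‖x - z‖ ^ 2 < Real.sqrt (t ^ (-1 / α))} := by
      intro x hx
      simp only [Set.mem_setOf_eq] at hx ⊢
      have hg0 : 0 < (r ^ 2 - ‖x - z‖ ^ 2) ^ 2 := by
        rcases eq_or_lt_of_le (sq_nonneg (r ^ 2 - ‖x - z‖ ^ 2)) with h | h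
        · rw [← h, Real.zero_rpow (neg_ne_zero.mpr hα0.ne')] at hx
          linarith
        · exact h
      have hglt : (r ^ 2 - ‖x - z‖ ^ 2) ^ 2 < t ^ (-1 / α) := by
        by_contra h
        push_neg at h
        have h2 : ((r ^ 2 - ‖x - z‖ ^ 2) ^ 2) ^ (-α) ≤ (t ^ (-1 / α)) ^ (-α) :=
          Real.rpow_le_rpow_of_nonpos (by positivity) h (by linarith)
        rw [← Real.rpow_mul ht.le] at h2
        have heq : -1 / α * -α = 1 := by field_simp
        rw [heq, Real.rpow_one] at h2
        linarith
      rcases le_or_gt (r ^ 2 - ‖x - z‖ ^ 2) 0 with h | h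
      · have : 0 < Real.sqrt (t ^ (-1 / α)) :=
          Real.sqrt_pos.mpr (Real.rpow_pos_of_pos ht _)
        linarith
      · exact (Real.lt_sqrt h.le).mpr hglt
    refine (measure_mono hsub).trans ?_
    refine (uniformBall_shell z hr hd (Real.sqrt_nonneg _)).trans ?_
    apply ENNReal.ofReal_le_ofReal
    rw [Real.sqrt_eq_rpow, ← Real.rpow_mul ht.le]
    have heq : -1 / α * (1 / 2) = -γ := by rw [hγdef]; field_simp
    rw [heq]
    exact le_of_eq (by ring)
  rw [← Set.Ioc_union_Ioi_eq_Ioi (zero_le_one (α := ℝ))]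
  apply ne_top_of_le_ne_top _ (lintegral_union_le _ _ _)
  apply ENNReal.add_ne_top.mpr
  constructor
  · refine ne_top_of_le_ne_top (b := volume (Set.Ioc (0:ℝ) 1)) (by simp [Real.volume_Ioc]) ?_
    calc ∫⁻ t in Set.Ioc (0:ℝ) 1, μB {x | t < ((r ^ 2 - ‖x - z‖ ^ 2) ^ 2) ^ (-α)}
          ≤ ∫⁻ _t in Set.Ioc (0:ℝ) 1, 1 := lintegral_mono fun t => prob_le_one
        _ = volume (Set.Ioc (0:ℝ) 1) := by
            rw [lintegral_one, Measure.restrict_apply_univ]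
  · have hint : IntegrableOn (fun t : ℝ => d / r ^ 2 * t ^ (-γ)) (Set.Ioi (1:ℝ)) :=
      (integrableOn_Ioi_rpow_of_lt (by linarith) one_pos).const_mul _
    apply ne_top_of_le_ne_top ((hasFiniteIntegral_def _ _).mp hint.2).ne
    calc ∫⁻ t in Set.Ioi (1:ℝ), μB {x | t < ((r ^ 2 - ‖x - z‖ ^ 2) ^ 2) ^ (-α)}
        ≤ ∫⁻ t in Set.Ioi (1:ℝ), ENNReal.ofReal (d / r ^ 2 * t ^ (-γ)) := by
          apply setLIntegral_mono ((measurable_id.pow_const (-γ)).const_mul _).ennreal_ofReal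
          intro t ht
          exact tail t (lt_trans zero_lt_one ht)
      _ ≤ ∫⁻ t in Set.Ioi (1:ℝ), (‖d / r ^ 2 * t ^ (-γ)‖₊ : ℝ≥0∞) :=
          lintegral_mono fun t => Real.ofReal_le_enorm _

lemma amgm_neg_pow {S : Finset ℕ} (hS : S.Nonempty) {X : ℕ → ℝ} (hX : ∀ j ∈ S, 0 < X j)
    (p : ℕ) :
    (∑ j ∈ S, X j) ^ (-(p : ℝ))
      ≤ (S.card : ℝ) ^ (-(p : ℝ)) * ∏ j ∈ S, X j ^ (-(p : ℝ) / S.card) := by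
  set n : ℝ := (S.card : ℝ) with hn_def
  have hn : 0 < n := by rw [hn_def]; exact_mod_cast Finset.card_pos.mpr hS
  have hGM := Real.geom_mean_le_arith_mean_weighted S (fun _ => 1 / n) X
    (fun i _ => by positivity)
    (by rw [Finset.sum_const]; rw [nsmul_eq_mul]; field_simp; exact hn_def.symm)
    (fun i hi => (hX i hi).le)
  have hGMpos : 0 < ∏ j ∈ S, X j ^ (1 / n) :=
    Finset.prod_pos fun j hj => Real.rpow_pos_of_pos (hX j hj) _
  have hGM' : ∏ j ∈ S, X j ^ (1 / n) ≤ ∑ i ∈ S, 1 / n * X i := hGM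
  have hsum : n * ∏ j ∈ S, X j ^ (1 / n) ≤ ∑ j ∈ S, X j := by
    calc n * ∏ j ∈ S, X j ^ (1 / n) ≤ n * ∑ i ∈ S, 1 / n * X i :=
          mul_le_mul_of_nonneg_left hGM' hn.le
      _ = ∑ j ∈ S, X j := by
          rw [Finset.mul_sum]
          apply Finset.sum_congr rfl
          intro j _
          field_simp
  have h1 : (∑ j ∈ S, X j) ^ (-(p : ℝ)) ≤ (n * ∏ j ∈ S, X j ^ (1 / n)) ^ (-(p : ℝ)) :=
    Real.rpow_le_rpow_of_nonpos (by positivity) hsum (by simp)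
  rw [Real.mul_rpow hn.le hGMpos.le] at h1
  refine h1.trans (le_of_eq ?_)
  congr 1
  rw [← Real.finset_prod_rpow S _ (fun j hj => Real.rpow_nonneg (hX j hj).le _) (-(p:ℝ))]
  apply Finset.prod_congr rfl
  intro j hj
  rw [← Real.rpow_mul (hX j hj).le]
  congr 1
  ring

lemma factor_bound {d : ℕ} {z : EuclideanSpace ℝ (Fin d)} {r : ℝ} (hr : 0 < r)
    (p : ℕ) {q n : ℕ} (hq : 0 < q) (hn : q ≤ n) :
    ∫⁻ x, ENNReal.ofReal (((r ^ 2 - ‖x - z‖ ^ 2) ^ 2) ^ (-(p:ℝ) / n)) ∂(uniformBall d z r)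
      ≤ (∫⁻ x, ENNReal.ofReal (((r ^ 2 - ‖x - z‖ ^ 2) ^ 2) ^ (-(p:ℝ) / q))
          ∂(uniformBall d z r)) ^ ((q:ℝ) / n) := by
  haveI := uniformBall_isProb (z := z) (d := d) hr
  have hn0 : 0 < n := lt_of_lt_of_le hq hn
  have hc0 : 0 < (q : ℝ) / n := by positivity
  have hc1 : (q : ℝ) / n ≤ 1 := by
    rw [div_le_one (by positivity)]
    exact_mod_cast hn
  have key : ∀ x : EuclideanSpace ℝ (Fin d),
      ENNReal.ofReal (((r ^ 2 - ‖x - z‖ ^ 2) ^ 2) ^ (-(p:ℝ) / n))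
        = (ENNReal.ofReal (((r ^ 2 - ‖x - z‖ ^ 2) ^ 2) ^ (-(p:ℝ) / q))) ^ ((q:ℝ) / n) := by
    intro x
    have e1 : (((r ^ 2 - ‖x - z‖ ^ 2) ^ 2) ^ (-(p:ℝ) / q)) ^ ((q:ℝ) / n)
        = ((r ^ 2 - ‖x - z‖ ^ 2) ^ 2) ^ (-(p:ℝ) / n) := by
      rw [← Real.rpow_mul (by positivity)]
      congr 1
      field_simp
    rw [← e1, ENNReal.ofReal_rpow_of_nonneg (Real.rpow_nonneg (by positivity) _) hc0.le]
  simp_rw [key]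
  apply jensen_rpow _ _ hc0 hc1
  exact (((continuous_const.sub (((continuous_id.sub continuous_const).norm).pow 2)).pow
    2).measurable.pow_const _).ennreal_ofReal

lemma lintegral_prod_indep {Ω : Type*} [MeasurableSpace Ω] (P : Measure Ω)
    [IsProbabilityMeasure P] {β : Type*} [MeasurableSpace β] (η : ℕ → Ω → β) (hηmeas : ∀ j, Measurable (η j))
    (hηindep : iIndepFun η P) (g : β → ℝ≥0∞) (hg : Measurable g)
    (S : Finset ℕ) :
    ∫⁻ ω, ∏ j ∈ S, g (η j ω) ∂P = ∏ j ∈ S, ∫⁻ ω, g (η j ω) ∂P := by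
  classical
  induction S using Finset.induction_on with
  | empty => simp
  | insert _ _ hiS ih =>
    rename_i i S
    have hcomp : iIndepFun (fun j => g ∘ η j) P :=
      hηindep.comp (fun _ => g) (fun _ => hg)
    have hmeas : ∀ j, Measurable (g ∘ η j) := fun j => hg.comp (hηmeas j)
    have hind : IndepFun (∏ j ∈ S, (g ∘ η j)) (g ∘ η i) P :=
      hcomp.indepFun_finset_prod_of_notMem hmeas hiS
    have hprodfn : (∏ j ∈ S, (g ∘ η j)) = fun ω => ∏ j ∈ S, g (η j ω) := by
      funext ω; simp [Finset.prod_apply]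
    rw [hprodfn] at hind
    have := lintegral_mul_eq_lintegral_mul_lintegral_of_indepFun
      (μ := P) (f := fun ω => g (η i ω)) (g := fun ω => ∏ j ∈ S, g (η j ω))
      (hg.comp (hηmeas i)) (Finset.measurable_prod _ fun j _ => hg.comp (hηmeas j))
      hind.symm
    calc ∫⁻ ω, ∏ j ∈ insert i S, g (η j ω) ∂P
        = ∫⁻ ω, ((fun ω => g (η i ω)) * fun ω => ∏ j ∈ S, g (η j ω)) ω ∂P := by
          apply lintegral_congr
          intro ω
          simp [Finset.prod_insert hiS]
      _ = (∫⁻ ω, g (η i ω) ∂P) * ∫⁻ ω, ∏ j ∈ S, g (η j ω) ∂P := this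
      _ = (∫⁻ ω, g (η i ω) ∂P) * ∏ j ∈ S, ∫⁻ ω, g (η j ω) ∂P := by rw [ih]
      _ = ∏ j ∈ insert i S, ∫⁻ ω, g (η j ω) ∂P := by rw [Finset.prod_insert hiS]

theorem truncated_inverse_moment {Ω : Type*} [MeasurableSpace Ω] (P : Measure Ω)
    [IsProbabilityMeasure P] (d : ℕ) (z : EuclideanSpace ℝ (Fin d)) (r : ℝ) (hr : 0 < r)
    (p : ℕ) (c : ℝ) (hc : 0 < c)
    (η : ℕ → Ω → EuclideanSpace ℝ (Fin d)) (hηmeas : ∀ j, Measurable (η j))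
    (hηindep : iIndepFun η P)
    (hηdist : ∀ j, Measure.map (η j) P = uniformBall d z r)
    (ε : ℕ → Ω → ℝ) (hεmeas : ∀ j, Measurable (ε j))
    (hεval : ∀ j ω, ε j ω = 0 ∨ ε j ω = 1)
    (hindep : IndepFun (fun ω => fun j => η j ω) (fun ω => fun j => ε j ω) P) :
    ∃ C : ℝ, 0 < C ∧ ∀ k : ℕ, (2 * p + 1 : ℝ) / c ≤ k →
      (∫⁻ ω in {ω | c * k ≤ ∑ j ∈ Finset.range k, ε j ω},
          ENNReal.ofReal
            ((∑ j ∈ Finset.range k,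
                (if ε j ω = 1 then (r ^ 2 - ‖η j ω - z‖ ^ 2) ^ 2 else 0)) ^ (-(p : ℝ))) ∂P)
        ≤ ENNReal.ofReal (C * (k : ℝ) ^ (-(p : ℝ))) := by
  classical
  -- trivial case p = 0
  rcases Nat.eq_zero_or_pos p with hp0 | hp
  · subst hp0
    refine ⟨1, one_pos, fun k _ => ?_⟩
    simp only [Nat.cast_zero, neg_zero, Real.rpow_zero, ENNReal.ofReal_one, one_mul]
    rw [setLIntegral_one]
    exact prob_le_one
  -- positivity facts
  have hq1 : (0:ℝ) < 2 * p + 1 := by positivity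
  rcases Nat.eq_zero_or_pos d with hd0 | hd
  · -- dimension zero : the ball is a single point and ψ² is the constant r⁴
    subst hd0
    refine ⟨(r ^ 4 * c) ^ (-(p:ℝ)) + 1, by positivity, fun k hk => ?_⟩
    have hkpos : (0:ℝ) < k := lt_of_lt_of_le (div_pos hq1 hc) hk
    have hAmeas : MeasurableSet {ω | c * k ≤ ∑ j ∈ Finset.range k, ε j ω} :=
      measurableSet_le measurable_const (Finset.measurable_sum _ fun j _ => hεmeas j)
    have hbound : ∀ ω ∈ {ω | c * k ≤ ∑ j ∈ Finset.range k, ε j ω},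
        ENNReal.ofReal ((∑ j ∈ Finset.range k,
            (if ε j ω = 1 then (r ^ 2 - ‖η j ω - z‖ ^ 2) ^ 2 else 0)) ^ (-(p : ℝ)))
          ≤ ENNReal.ofReal ((r ^ 4 * c * k) ^ (-(p:ℝ))) := by
      intro ω hω
      apply ENNReal.ofReal_le_ofReal
      have hsum : (∑ j ∈ Finset.range k,
          (if ε j ω = 1 then (r ^ 2 - ‖η j ω - z‖ ^ 2) ^ 2 else 0))
            = r ^ 4 * ∑ j ∈ Finset.range k, ε j ω := by
        rw [Finset.mul_sum]
        apply Finset.sum_congr rfl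
        intro j _
        have hz : η j ω = z := Subsingleton.elim _ _
        rcases hεval j ω with h0 | h1
        · rw [h0]; norm_num
        · rw [h1]; rw [hz]; simp; ring
      rw [hsum]
      apply Real.rpow_le_rpow_of_nonpos (by positivity) ?_ (by simp)
      calc r ^ 4 * c * k = r ^ 4 * (c * k) := by ring
        _ ≤ r ^ 4 * ∑ j ∈ Finset.range k, ε j ω := by
            apply mul_le_mul_of_nonneg_left hω (by positivity)
    calc ∫⁻ ω in {ω | c * k ≤ ∑ j ∈ Finset.range k, ε j ω},
          ENNReal.ofReal ((∑ j ∈ Finset.range k,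
            (if ε j ω = 1 then (r ^ 2 - ‖η j ω - z‖ ^ 2) ^ 2 else 0)) ^ (-(p : ℝ))) ∂P
        ≤ ∫⁻ _ω in {ω | c * k ≤ ∑ j ∈ Finset.range k, ε j ω},
            ENNReal.ofReal ((r ^ 4 * c * k) ^ (-(p:ℝ))) ∂P :=
          setLIntegral_mono' hAmeas hbound
      _ = ENNReal.ofReal ((r ^ 4 * c * k) ^ (-(p:ℝ)))
            * P {ω | c * k ≤ ∑ j ∈ Finset.range k, ε j ω} := setLIntegral_const _ _
      _ ≤ ENNReal.ofReal ((r ^ 4 * c * k) ^ (-(p:ℝ))) * 1 :=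
          mul_le_mul_right prob_le_one _
      _ ≤ ENNReal.ofReal (((r ^ 4 * c) ^ (-(p:ℝ)) + 1) * (k:ℝ) ^ (-(p : ℝ))) := by
          rw [mul_one]
          apply ENNReal.ofReal_le_ofReal
          rw [Real.mul_rpow (by positivity) hkpos.le]
          apply mul_le_mul_of_nonneg_right _ (Real.rpow_nonneg hkpos.le _)
          linarith
  -- main case : p ≥ 1, d ≥ 1
  set q : ℕ := 2 * p + 1 with hq_def
  have hq : 0 < q := by omega
  have hα0 : (0:ℝ) < (p:ℝ) / q := by
    have : (0:ℝ) < p := by exact_mod_cast hp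
    positivity
  have hαh : (p:ℝ) / q < 1 / 2 := by
    rw [div_lt_div_iff₀ (by positivity) (by norm_num)]
    push_cast [hq_def]
    linarith
  set K : ℝ≥0∞ := ∫⁻ x, ENNReal.ofReal (((r ^ 2 - ‖x - z‖ ^ 2) ^ 2) ^ (-(p:ℝ) / q))
      ∂(uniformBall d z r) with hK_def
  have hKfin : K ≠ ⊤ := by
    have h := K_lt_top z hr hd hα0 hαh
    rw [hK_def]
    simpa [neg_div] using h
  have hKq_fin : K ^ (q:ℝ) ≠ ⊤ := ENNReal.rpow_ne_top_of_nonneg (by positivity) hKfin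
  set KR : ℝ := (K ^ (q:ℝ)).toReal with hKR_def
  have hKq : K ^ (q:ℝ) = ENNReal.ofReal KR := (ENNReal.ofReal_toReal hKq_fin).symm
  have hcp : (0:ℝ) < c ^ (-(p:ℝ)) := Real.rpow_pos_of_pos hc _
  refine ⟨c ^ (-(p:ℝ)) * KR + 1, by nlinarith [ENNReal.toReal_nonneg (a := K ^ (q:ℝ))], ?_⟩
  intro k hk
  have hkpos : (0:ℝ) < k := lt_of_lt_of_le (div_pos hq1 hc) hk
  have hck_pos : (0:ℝ) < c * k := by positivity
  have hqck : (q:ℝ) ≤ c * k := by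
    have h2 : 2 * (p:ℝ) + 1 ≤ k * c := (div_le_iff₀ hc).mp hk
    push_cast [hq_def]
    linarith
  -- the events
  set E : Finset ℕ → Set Ω :=
    fun S => {ω | ∀ j ∈ Finset.range k, ε j ω = if j ∈ S then (1:ℝ) else 0} with hE_def
  have hEmeas : ∀ S, MeasurableSet (E S) := by
    intro S
    have : E S = ⋂ j ∈ Finset.range k, (ε j) ⁻¹' {if j ∈ S then (1:ℝ) else 0} := by
      ext ω; simp [hE_def]
    rw [this]
    exact MeasurableSet.biInter (Finset.range k).countable_toSet fun j _ =>
      (hεmeas j) (measurableSet_singleton _)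
  set 𝒮 : Finset (Finset ℕ) :=
    (Finset.range k).powerset.filter (fun S => (c * k : ℝ) ≤ S.card) with h𝒮_def
  have hdisj : Set.PairwiseDisjoint (↑𝒮) E := by
    intro S hS T hT hST
    simp only [Function.onFun]
    rw [Set.disjoint_left]
    intro ω hωS hωT
    apply hST
    have hSsub : S ⊆ Finset.range k := by
      simp only [h𝒮_def, Finset.mem_coe, Finset.mem_filter, Finset.mem_powerset] at hS
      exact hS.1
    have hTsub : T ⊆ Finset.range k := by
      simp only [h𝒮_def, Finset.mem_coe, Finset.mem_filter, Finset.mem_powerset] at hT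
      exact hT.1
    ext j
    by_cases hjk : j ∈ Finset.range k
    · have h1 := hωS j hjk
      have h2 := hωT j hjk
      rw [h1] at h2
      by_cases hjS : j ∈ S <;> by_cases hjT : j ∈ T <;>
        simp [hjS, hjT] at h2 ⊢ <;> tauto
    · constructor
      · intro h; exact absurd (hSsub h) hjk
      · intro h; exact absurd (hTsub h) hjk
  have hcover : {ω | c * k ≤ ∑ j ∈ Finset.range k, ε j ω} ⊆ ⋃ S ∈ 𝒮, E S := by
    intro ω hω
    set S₀ : Finset ℕ := (Finset.range k).filter (fun j => ε j ω = 1) with hS₀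
    have hmem : ∀ j ∈ Finset.range k, ε j ω = if j ∈ S₀ then (1:ℝ) else 0 := by
      intro j hj
      by_cases hjS : j ∈ S₀
      · simp only [hjS, if_true]
        exact (Finset.mem_filter.mp hjS).2
      · simp only [hjS, if_false]
        rcases hεval j ω with h0 | h1
        · exact h0
        · exact absurd (Finset.mem_filter.mpr ⟨hj, h1⟩) hjS
    have hsum : ∑ j ∈ Finset.range k, ε j ω = (S₀.card : ℝ) := by
      calc ∑ j ∈ Finset.range k, ε j ω
          = ∑ j ∈ Finset.range k, (if j ∈ S₀ then (1:ℝ) else 0) :=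
            Finset.sum_congr rfl hmem
        _ = ∑ _j ∈ S₀, (1:ℝ) := by
            rw [Finset.sum_ite_mem, (Finset.inter_eq_right).mpr (Finset.filter_subset _ _)]
        _ = (S₀.card : ℝ) := by rw [Finset.sum_const]; simp
    apply Set.mem_biUnion (show S₀ ∈ 𝒮 from ?_) (show ω ∈ E S₀ from hmem)
    rw [h𝒮_def, Finset.mem_filter, Finset.mem_powerset]
    refine ⟨Finset.filter_subset _ _, ?_⟩
    rw [← hsum]
    exact hω
  -- a.e. positivity
  have hae : ∀ᵐ ω ∂P, ∀ j : ℕ, 0 < r ^ 2 - ‖η j ω - z‖ ^ 2 := by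
    rw [ae_all_iff]
    intro j
    have h0 : P (η j ⁻¹' (Metric.ball z r)ᶜ) = 0 := by
      have h := uniformBall_compl_ball (d := d) (z := z) (r := r)
      rw [← hηdist j, Measure.map_apply (hηmeas j)
        Metric.isOpen_ball.measurableSet.compl] at h
      exact h
    rw [ae_iff]
    refine measure_mono_null ?_ h0
    intro ω hω
    simp only [Set.mem_setOf_eq, not_lt] at hω
    simp only [Set.mem_preimage, Set.mem_compl_iff, Metric.mem_ball]
    intro hmem
    have h1 : ‖η j ω - z‖ < r := by rwa [dist_eq_norm] at hmem
    have h2 : ‖η j ω - z‖ ^ 2 < r ^ 2 := by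
      apply pow_lt_pow_left₀ h1 (norm_nonneg _) (by norm_num)
    linarith
  -- key per-event bound
  have key : ∀ S ∈ 𝒮,
      ∫⁻ ω in E S, ENNReal.ofReal ((∑ j ∈ Finset.range k,
          (if ε j ω = 1 then (r ^ 2 - ‖η j ω - z‖ ^ 2) ^ 2 else 0)) ^ (-(p : ℝ))) ∂P
        ≤ ENNReal.ofReal ((c * k) ^ (-(p:ℝ))) * (K ^ (q:ℝ) * P (E S)) := by
    intro S hS
    obtain ⟨hSsub, hScard⟩ : S ⊆ Finset.range k ∧ (c * k : ℝ) ≤ S.card := by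
      rw [h𝒮_def, Finset.mem_filter, Finset.mem_powerset] at hS
      exact hS
    have hn_posR : (0:ℝ) < S.card := lt_of_lt_of_le hck_pos hScard
    have hn_pos : 0 < S.card := by exact_mod_cast hn_posR
    have hSne : S.Nonempty := Finset.card_pos.mp hn_pos
    have hqn : q ≤ S.card := by
      have : (q:ℝ) ≤ S.card := le_trans hqck hScard
      exact_mod_cast this
    set n : ℕ := S.card with hn_def
    set gS : EuclideanSpace ℝ (Fin d) → ℝ≥0∞ :=
      fun x => ENNReal.ofReal (((r ^ 2 - ‖x - z‖ ^ 2) ^ 2) ^ (-(p:ℝ) / n)) with hgS_def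
    have hgSmeas : Measurable gS :=
      (((continuous_const.sub (((continuous_id.sub
        continuous_const).norm).pow 2)).pow 2).measurable.pow_const _).ennreal_ofReal
    -- step 1 : pointwise domination
    have step1 : ∫⁻ ω in E S, ENNReal.ofReal ((∑ j ∈ Finset.range k,
          (if ε j ω = 1 then (r ^ 2 - ‖η j ω - z‖ ^ 2) ^ 2 else 0)) ^ (-(p : ℝ))) ∂P
        ≤ ENNReal.ofReal ((n:ℝ) ^ (-(p:ℝ)))
          * ∫⁻ ω, (E S).indicator (fun _ => (1:ℝ≥0∞)) ω * ∏ j ∈ S, gS (η j ω) ∂P := by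
      have hFGmeas : Measurable fun ω =>
          (E S).indicator (fun _ => (1:ℝ≥0∞)) ω * ∏ j ∈ S, gS (η j ω) := by
        apply Measurable.mul
        · exact measurable_const.indicator (hEmeas S)
        · exact Finset.measurable_prod _ fun j _ => hgSmeas.comp (hηmeas j)
      rw [← lintegral_indicator (hEmeas S), ← lintegral_const_mul _ hFGmeas]
      apply lintegral_mono_ae
      filter_upwards [hae] with ω hgood
      by_cases hω : ω ∈ E S
      · rw [Set.indicator_of_mem hω, Set.indicator_of_mem hω, one_mul]
        have hXpos : ∀ j ∈ S, 0 < (r ^ 2 - ‖η j ω - z‖ ^ 2) ^ 2 := by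
          intro j _
          have := hgood j
          positivity
        have hsum_eq : (∑ j ∈ Finset.range k,
            if ε j ω = 1 then (r ^ 2 - ‖η j ω - z‖ ^ 2) ^ 2 else 0)
              = ∑ j ∈ S, (r ^ 2 - ‖η j ω - z‖ ^ 2) ^ 2 := by
          have hcongr : ∀ j ∈ Finset.range k,
              (if ε j ω = 1 then (r ^ 2 - ‖η j ω - z‖ ^ 2) ^ 2 else 0)
                = (if j ∈ S then (r ^ 2 - ‖η j ω - z‖ ^ 2) ^ 2 else 0) := by
            intro j hj
            have hεj := hω j hj
            by_cases hjS : j ∈ S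
            · rw [if_pos hjS] at hεj
              rw [if_pos hεj, if_pos hjS]
            · rw [if_neg hjS] at hεj
              rw [if_neg (by rw [hεj]; norm_num), if_neg hjS]
          rw [Finset.sum_congr rfl hcongr, Finset.sum_ite_mem,
            (Finset.inter_eq_right).mpr hSsub]
        rw [hsum_eq]
        have hamgm := amgm_neg_pow hSne hXpos p
        calc ENNReal.ofReal ((∑ j ∈ S, (r ^ 2 - ‖η j ω - z‖ ^ 2) ^ 2) ^ (-(p:ℝ)))
            ≤ ENNReal.ofReal ((n:ℝ) ^ (-(p:ℝ))
                * ∏ j ∈ S, ((r ^ 2 - ‖η j ω - z‖ ^ 2) ^ 2) ^ (-(p:ℝ) / n)) :=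
              ENNReal.ofReal_le_ofReal hamgm
          _ = ENNReal.ofReal ((n:ℝ) ^ (-(p:ℝ))) * ∏ j ∈ S, gS (η j ω) := by
              rw [ENNReal.ofReal_mul (Real.rpow_nonneg (Nat.cast_nonneg n) _),
                ENNReal.ofReal_prod_of_nonneg
                  (fun j _ => Real.rpow_nonneg (sq_nonneg _) _)]
      · rw [Set.indicator_of_notMem hω, Set.indicator_of_notMem hω, zero_mul, mul_zero]
    -- step 2 : independence factorization
    set M : Set (ℕ → ℝ) :=
      {v | ∀ j ∈ Finset.range k, v j = if j ∈ S then (1:ℝ) else 0} with hM_def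
    have hMmeas : MeasurableSet M := by
      have : M = ⋂ j ∈ Finset.range k,
          (fun v : ℕ → ℝ => v j) ⁻¹' {if j ∈ S then (1:ℝ) else 0} := by
        ext v; simp [hM_def]
      rw [this]
      exact MeasurableSet.biInter (Finset.range k).countable_toSet fun j _ =>
        (measurable_pi_apply j) (measurableSet_singleton _)
    have hind_eq : (fun ω => (E S).indicator (fun _ => (1:ℝ≥0∞)) ω)
        = fun ω => Set.indicator M (fun _ => (1:ℝ≥0∞)) (fun j => ε j ω) := by
      funext ω
      by_cases hω : ω ∈ E S
      · rw [Set.indicator_of_mem hω, Set.indicator_of_mem (by exact hω)]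
      · rw [Set.indicator_of_notMem hω, Set.indicator_of_notMem (by exact hω)]
    have hFind : IndepFun (fun ω => Set.indicator M (fun _ => (1:ℝ≥0∞)) (fun j => ε j ω))
        (fun ω => ∏ j ∈ S, gS (η j ω)) P := by
      have hφm : Measurable fun v : ℕ → ℝ => Set.indicator M (fun _ => (1:ℝ≥0∞)) v :=
        measurable_const.indicator hMmeas
      have hψm : Measurable fun v : ℕ → EuclideanSpace ℝ (Fin d) => ∏ j ∈ S, gS (v j) :=
        Finset.measurable_prod _ fun j _ => hgSmeas.comp (measurable_pi_apply j)
      have h : IndepFun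
          ((fun v : ℕ → ℝ => Set.indicator M (fun _ => (1:ℝ≥0∞)) v)
            ∘ (fun ω => fun j => ε j ω))
          ((fun v : ℕ → EuclideanSpace ℝ (Fin d) => ∏ j ∈ S, gS (v j))
            ∘ (fun ω => fun j => η j ω)) P :=
        hindep.symm.comp hφm hψm
      exact h
    have step2 : ∫⁻ ω, (E S).indicator (fun _ => (1:ℝ≥0∞)) ω * ∏ j ∈ S, gS (η j ω) ∂P
        = P (E S) * ∏ j ∈ S, ∫⁻ ω, gS (η j ω) ∂P := by
      calc ∫⁻ ω, (E S).indicator (fun _ => (1:ℝ≥0∞)) ω * ∏ j ∈ S, gS (η j ω) ∂P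
          = ∫⁻ ω, ((fun ω => Set.indicator M (fun _ => (1:ℝ≥0∞)) (fun j => ε j ω))
              * fun ω => ∏ j ∈ S, gS (η j ω)) ω ∂P := by
            apply lintegral_congr
            intro ω
            rw [Pi.mul_apply, ← congrFun hind_eq ω]
        _ = (∫⁻ ω, Set.indicator M (fun _ => (1:ℝ≥0∞)) (fun j => ε j ω) ∂P)
              * ∫⁻ ω, ∏ j ∈ S, gS (η j ω) ∂P :=
            lintegral_mul_eq_lintegral_mul_lintegral_of_indepFun
              ((measurable_const.indicator hMmeas).comp
                (measurable_pi_lambda _ fun j => hεmeas j))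
              (Finset.measurable_prod _ fun j _ => hgSmeas.comp (hηmeas j)) hFind
        _ = P (E S) * ∏ j ∈ S, ∫⁻ ω, gS (η j ω) ∂P := by
            congr 1
            · calc ∫⁻ ω, Set.indicator M (fun _ => (1:ℝ≥0∞)) (fun j => ε j ω) ∂P
                  = ∫⁻ ω, (E S).indicator (fun _ => (1:ℝ≥0∞)) ω ∂P := by
                    apply lintegral_congr
                    intro ω
                    exact (congrFun hind_eq ω).symm
                _ = P (E S) := by rw [lintegral_indicator_const (hEmeas S), one_mul]
            · exact lintegral_prod_indep P η hηmeas hηindep gS hgSmeas S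
    -- step 3 : single-factor bound and product
    have step3 : ∏ j ∈ S, ∫⁻ ω, gS (η j ω) ∂P ≤ K ^ (q:ℝ) := by
      have hone : ∀ j ∈ S, ∫⁻ ω, gS (η j ω) ∂P ≤ K ^ ((q:ℝ) / (n:ℝ)) := by
        intro j _
        rw [← lintegral_map hgSmeas (hηmeas j), hηdist j]
        exact factor_bound hr p hq hqn
      calc ∏ j ∈ S, ∫⁻ ω, gS (η j ω) ∂P
          ≤ ∏ _j ∈ S, K ^ ((q:ℝ) / (n:ℝ)) := Finset.prod_le_prod' hone
        _ = (K ^ ((q:ℝ) / (n:ℝ))) ^ (n:ℕ) := by rw [Finset.prod_const, hn_def]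
        _ = K ^ (q:ℝ) := by
            rw [← ENNReal.rpow_natCast (K ^ ((q:ℝ) / (n:ℝ))) n, ← ENNReal.rpow_mul]
            congr 1
            field_simp
    -- combine
    calc ∫⁻ ω in E S, ENNReal.ofReal ((∑ j ∈ Finset.range k,
          (if ε j ω = 1 then (r ^ 2 - ‖η j ω - z‖ ^ 2) ^ 2 else 0)) ^ (-(p : ℝ))) ∂P
        ≤ ENNReal.ofReal ((n:ℝ) ^ (-(p:ℝ)))
            * ∫⁻ ω, (E S).indicator (fun _ => (1:ℝ≥0∞)) ω * ∏ j ∈ S, gS (η j ω) ∂P := step1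
      _ = ENNReal.ofReal ((n:ℝ) ^ (-(p:ℝ)))
            * (P (E S) * ∏ j ∈ S, ∫⁻ ω, gS (η j ω) ∂P) := by rw [step2]
      _ ≤ ENNReal.ofReal ((n:ℝ) ^ (-(p:ℝ))) * (P (E S) * K ^ (q:ℝ)) :=
          mul_le_mul_right (mul_le_mul_right step3 _) _
      _ ≤ ENNReal.ofReal ((c * k) ^ (-(p:ℝ))) * (P (E S) * K ^ (q:ℝ)) := by
          apply mul_le_mul_left
          apply ENNReal.ofReal_le_ofReal
          exact Real.rpow_le_rpow_of_nonpos hck_pos hScard (by simp)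
      _ = ENNReal.ofReal ((c * k) ^ (-(p:ℝ))) * (K ^ (q:ℝ) * P (E S)) := by
          rw [mul_comm (P (E S))]
  -- put everything together
  calc ∫⁻ ω in {ω | c * k ≤ ∑ j ∈ Finset.range k, ε j ω},
        ENNReal.ofReal ((∑ j ∈ Finset.range k,
          (if ε j ω = 1 then (r ^ 2 - ‖η j ω - z‖ ^ 2) ^ 2 else 0)) ^ (-(p : ℝ))) ∂P
      ≤ ∫⁻ ω in ⋃ S ∈ 𝒮, E S,
          ENNReal.ofReal ((∑ j ∈ Finset.range k,
            (if ε j ω = 1 then (r ^ 2 - ‖η j ω - z‖ ^ 2) ^ 2 else 0)) ^ (-(p : ℝ))) ∂P :=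
        lintegral_mono_set hcover
    _ = ∑ S ∈ 𝒮, ∫⁻ ω in E S,
          ENNReal.ofReal ((∑ j ∈ Finset.range k,
            (if ε j ω = 1 then (r ^ 2 - ‖η j ω - z‖ ^ 2) ^ 2 else 0)) ^ (-(p : ℝ))) ∂P :=
        lintegral_biUnion_finset hdisj (fun S _ => hEmeas S) _
    _ ≤ ∑ S ∈ 𝒮, ENNReal.ofReal ((c * k) ^ (-(p:ℝ))) * (K ^ (q:ℝ) * P (E S)) :=
        Finset.sum_le_sum key
    _ = ENNReal.ofReal ((c * k) ^ (-(p:ℝ))) * K ^ (q:ℝ) * ∑ S ∈ 𝒮, P (E S) := by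
        rw [Finset.mul_sum]
        apply Finset.sum_congr rfl
        intro S _
        ring
    _ ≤ ENNReal.ofReal ((c * k) ^ (-(p:ℝ))) * K ^ (q:ℝ) * 1 := by
        apply mul_le_mul_right
        rw [← measure_biUnion_finset hdisj (fun S _ => hEmeas S)]
        exact prob_le_one
    _ ≤ ENNReal.ofReal ((c ^ (-(p:ℝ)) * KR + 1) * (k:ℝ) ^ (-(p : ℝ))) := by
        rw [mul_one, hKq, ← ENNReal.ofReal_mul (Real.rpow_nonneg hck_pos.le _)]
        apply ENNReal.ofReal_le_ofReal
        rw [Real.mul_rpow hc.le hkpos.le]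
        calc c ^ (-(p:ℝ)) * (k:ℝ) ^ (-(p:ℝ)) * KR
            = (c ^ (-(p:ℝ)) * KR) * (k:ℝ) ^ (-(p:ℝ)) := by ring
          _ ≤ (c ^ (-(p:ℝ)) * KR + 1) * (k:ℝ) ^ (-(p:ℝ)) := by
              apply mul_le_mul_of_nonneg_right _ (Real.rpow_nonneg hkpos.le _)
              linarith
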